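/- arXiv:2006.16875 — 3 statements merged into one kernel-verified Lean document; each statement's English description precedes it below -/
import Mathlib

section
/- Let φ : ℝ → ℝ be bounded, continuous, symmetric with center c ∈ ℝ, strictly decreasing on (c, ∞), and not globally constant. For h > 0 let φ_h be its Gaussian mollification φ_h(x) = ∫ (1/√(2π)) φ(x + hy) e^{−y²/2} dy. Then φ_h is differentiable and sgn(φ_h′(x)) = −sgn(x − c) for all x ∈ ℝ; in particular φ_h′(x) < 0 for x > c. -/
open MeasureTheory

section Stmt4Aux

open Real

private lemma antiIci' {φ : ℝ → ℝ} {c : ℝ} (hcont : Continuous φ)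
    (hdec : StrictAntiOn φ (Set.Ioi c)) : StrictAntiOn φ (Set.Ici c) := by
  intro a ha b hb hab
  rcases (Set.mem_Ici.mp ha).eq_or_lt with rfl | ha'
  · set m := (c + b) / 2 with hm
    have hm1 : c < m := by simp only [hm]; linarith
    have hm2 : m < b := by simp only [hm]; linarith
    have h1 : φ b < φ m := hdec hm1 (hm1.trans hm2) hm2
    have tend : Filter.Tendsto φ (nhdsWithin c (Set.Ioi c)) (nhds (φ c)) :=
      (hcont.tendsto c).mono_left nhdsWithin_le_nhds
    have ev : ∀ᶠ z in nhdsWithin c (Set.Ioi c), φ m ≤ φ z := by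
      filter_upwards [Ioo_mem_nhdsGT_of_mem ⟨le_refl c, hm1⟩] with z hz
      exact (hdec hz.1 hm1 hz.2).le
    have h2 : φ m ≤ φ c := ge_of_tendsto tend ev
    linarith
  · exact hdec ha' (lt_trans ha' hab) hab

private lemma cmp' {φ : ℝ → ℝ} {c : ℝ} (hcont : Continuous φ)
    (hsym : ∀ x, φ (c - x) = φ (c + x)) (hdec : StrictAntiOn φ (Set.Ioi c)) :
    ∀ x, c < x → ∀ t, 0 < t → φ (x + t) < φ (x - t) := by
  intro x hx t ht
  have A := antiIci' hcont hdec
  by_cases hxt : c ≤ x - t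
  · exact A hxt (by simp only [Set.mem_Ici]; linarith) (by linarith)
  · push_neg at hxt
    have e : φ (x - t) = φ (2 * c - (x - t)) := by
      have := hsym (c - (x - t))
      have e1 : c - (c - (x - t)) = x - t := by ring
      have e2 : c + (c - (x - t)) = 2 * c - (x - t) := by ring
      rw [e1, e2] at this; exact this
    rw [e]
    exact A (by simp only [Set.mem_Ici]; linarith) (by simp only [Set.mem_Ici]; linarith)
      (by linarith)

private lemma chg' {φ : ℝ → ℝ} {h : ℝ} (hh : 0 < h) (x : ℝ) :
    (∫ y : ℝ, (1 / Real.sqrt (2 * Real.pi)) * φ (x + h * y) * Real.exp (-y ^ 2 / 2))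
      = ∫ u : ℝ, (h⁻¹ * ((1 / Real.sqrt (2 * Real.pi)) * φ u)) *
          Real.exp (-((u - x) / h) ^ 2 / 2) := by
  have h0 : h ≠ 0 := ne_of_gt hh
  set g : ℝ → ℝ := fun t => (1 / Real.sqrt (2 * Real.pi)) * φ (x + t) *
    Real.exp (-(t / h) ^ 2 / 2) with hg
  have e1 : (fun y : ℝ => (1 / Real.sqrt (2 * Real.pi)) * φ (x + h * y) *
      Real.exp (-y ^ 2 / 2)) = fun y => g (h * y) := by
    funext y
    simp only [hg]
    congr 2
    field_simp
  rw [e1, Measure.integral_comp_mul_left g h, ← integral_sub_right_eq_self g x,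
    abs_inv, abs_of_pos hh, smul_eq_mul, ← integral_const_mul]
  congr 1
  funext u
  simp only [hg, add_sub_cancel]
  ring

private lemma hasDeriv' {φ : ℝ → ℝ} {M h : ℝ} (hM : ∀ x, |φ x| ≤ M) (hcont : Continuous φ)
    (hh : 0 < h) (x₀ : ℝ) :
    Integrable (fun u : ℝ => (h⁻¹ * ((1 / Real.sqrt (2 * Real.pi)) * φ u)) *
        (Real.exp (-((u - x₀) / h) ^ 2 / 2) * ((u - x₀) / h ^ 2))) ∧
    HasDerivAt (fun x : ℝ => ∫ u : ℝ, (h⁻¹ * ((1 / Real.sqrt (2 * Real.pi)) * φ u)) *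
        Real.exp (-((u - x) / h) ^ 2 / 2))
      (∫ u : ℝ, (h⁻¹ * ((1 / Real.sqrt (2 * Real.pi)) * φ u)) *
        (Real.exp (-((u - x₀) / h) ^ 2 / 2) * ((u - x₀) / h ^ 2))) x₀ := by
  have h0 : h ≠ 0 := ne_of_gt hh
  have h2 : (0:ℝ) < h ^ 2 := by positivity
  set C : ℝ := 1 / Real.sqrt (2 * Real.pi) with hCdef
  have hC : 0 < C := by
    have : 0 < Real.sqrt (2 * Real.pi) := Real.sqrt_pos.mpr (by positivity)
    positivity
  have hM0 : 0 ≤ M := le_trans (abs_nonneg _) (hM 0)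
  set F : ℝ → ℝ → ℝ := fun x u => (h⁻¹ * (C * φ u)) * Real.exp (-((u - x) / h) ^ 2 / 2)
    with hFdef
  set F' : ℝ → ℝ → ℝ := fun x u => (h⁻¹ * (C * φ u)) *
    (Real.exp (-((u - x) / h) ^ 2 / 2) * ((u - x) / h ^ 2)) with hF'def
  have gauss : ∀ b : ℝ, 0 < b → Integrable (fun u : ℝ => Real.exp (-b * (u - x₀) ^ 2)) :=
    fun b hb => (integrable_exp_neg_mul_sq hb).comp_sub_right x₀
  have contF : ∀ x, Continuous (F x) := by
    intro x
    exact (continuous_const.mul (continuous_const.mul hcont)).mul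
      (Real.continuous_exp.comp (by fun_prop))
  have contF' : ∀ x, Continuous (F' x) := by
    intro x
    exact (continuous_const.mul (continuous_const.mul hcont)).mul
      ((Real.continuous_exp.comp (by fun_prop)).mul (by fun_prop))
  have hF_int : Integrable (F x₀) := by
    apply Integrable.mono' (((gauss ((2 * h ^ 2)⁻¹) (by positivity)).const_mul (h⁻¹ * (C * M))))
      (contF x₀).aestronglyMeasurable
    filter_upwards with u
    have e : -((u - x₀) / h) ^ 2 / 2 = -(2 * h ^ 2)⁻¹ * (u - x₀) ^ 2 := by
      rw [div_pow]
      field_simp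
    simp only [hFdef, e, Real.norm_eq_abs]
    rw [abs_mul, abs_mul, abs_mul, abs_inv, abs_of_pos hh, abs_of_pos hC, Real.abs_exp]
    gcongr
    exact hM u
  have h_diff : ∀ u : ℝ, ∀ x : ℝ, HasDerivAt (fun x => F x u) (F' x u) x := by
    intro u x
    have d1 : HasDerivAt (fun x : ℝ => (u - x) / h) (-1 / h) x :=
      ((hasDerivAt_id x).const_sub u).div_const h
    have d2 := (((d1.pow 2).neg).div_const 2)
    have d3 : HasDerivAt (fun x : ℝ => -((u - x) / h) ^ 2 / 2) ((u - x) / h ^ 2) x := by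
      refine d2.congr_deriv ?_
      ring
    have d4 := (d3.exp).const_mul (h⁻¹ * (C * φ u))
    convert d4 using 1
  have key_bound : ∀ u : ℝ, ∀ x ∈ Metric.ball x₀ 1, ‖F' x u‖ ≤
      (C * M / h ^ 2 * Real.exp (1 / (4 * h ^ 2))) *
        Real.exp (-(1 / (8 * h ^ 2)) * (u - x₀) ^ 2) := by
    intro u x hx
    have hdist : |x - x₀| < 1 := by
      rw [Metric.mem_ball, Real.dist_eq] at hx; exact hx
    have hx2 : (x - x₀) ^ 2 < 1 := by nlinarith [sq_abs (x - x₀), abs_nonneg (x - x₀)]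
    set s : ℝ := (u - x) / h with hs
    have habs : |s| = |u - x| / h := by rw [hs, abs_div, abs_of_pos hh]
    have e1 : ‖F' x u‖ = C * |φ u| / h ^ 2 * (Real.exp (-s ^ 2 / 2) * |s|) := by
      rw [Real.norm_eq_abs]
      show |(h⁻¹ * (C * φ u)) * (Real.exp (-((u - x) / h) ^ 2 / 2) * ((u - x) / h ^ 2))|
        = _
      simp only [abs_mul, abs_div, abs_inv, Real.abs_exp, abs_of_pos hh, abs_of_pos hC,
        abs_of_pos h2]
      rw [habs, hs]
      ring
    have e2 : Real.exp (-s ^ 2 / 2) * |s| ≤ Real.exp (-s ^ 2 / 4) := by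
      have h1 : |s| ≤ s ^ 2 / 4 + 1 := by nlinarith [sq_nonneg (|s| - 2), sq_abs s]
      have hb : Real.exp (-s ^ 2 / 2) * |s| ≤ Real.exp (-s ^ 2 / 2) * Real.exp (s ^ 2 / 4) :=
        mul_le_mul_of_nonneg_left (h1.trans (Real.add_one_le_exp _)) (Real.exp_pos _).le
      calc Real.exp (-s ^ 2 / 2) * |s| ≤ Real.exp (-s ^ 2 / 2) * Real.exp (s ^ 2 / 4) := hb
        _ = Real.exp (-s ^ 2 / 4) := by rw [← Real.exp_add]; ring_nf
    have e3 : Real.exp (-s ^ 2 / 4) ≤ Real.exp (1 / (4 * h ^ 2)) *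
        Real.exp (-(1 / (8 * h ^ 2)) * (u - x₀) ^ 2) := by
      rw [← Real.exp_add]
      apply Real.exp_le_exp.mpr
      have hsq : (u - x₀) ^ 2 / 2 - 1 ≤ (u - x) ^ 2 := by
        nlinarith [sq_nonneg ((u - x₀) - 2 * (x - x₀))]
      have hse : s ^ 2 = (u - x) ^ 2 / h ^ 2 := by rw [hs, div_pow]
      rw [hse, ← sub_nonneg]
      have eq1 : 1 / (4 * h ^ 2) + -(1 / (8 * h ^ 2)) * (u - x₀) ^ 2 -
          -((u - x) ^ 2 / h ^ 2) / 4 =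
          (2 - (u - x₀) ^ 2 + 2 * (u - x) ^ 2) / (8 * h ^ 2) := by
        field_simp
        ring
      rw [eq1]
      apply div_nonneg (by linarith) (by positivity)
    calc ‖F' x u‖ = C * |φ u| / h ^ 2 * (Real.exp (-s ^ 2 / 2) * |s|) := e1
      _ ≤ C * M / h ^ 2 * Real.exp (-s ^ 2 / 4) := by
          apply mul_le_mul (by gcongr; exact hM u) e2 (by positivity) (by positivity)
      _ ≤ C * M / h ^ 2 * (Real.exp (1 / (4 * h ^ 2)) *
            Real.exp (-(1 / (8 * h ^ 2)) * (u - x₀) ^ 2)) := by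
          apply mul_le_mul_of_nonneg_left e3 (by positivity)
      _ = (C * M / h ^ 2 * Real.exp (1 / (4 * h ^ 2))) *
            Real.exp (-(1 / (8 * h ^ 2)) * (u - x₀) ^ 2) := by ring
  have main := hasDerivAt_integral_of_dominated_loc_of_deriv_le (μ := volume)
    (F := F) (F' := F') (x₀ := x₀)
    (bound := fun u => (C * M / h ^ 2 * Real.exp (1 / (4 * h ^ 2))) *
      Real.exp (-(1 / (8 * h ^ 2)) * (u - x₀) ^ 2))
    (Metric.ball_mem_nhds x₀ one_pos)
    (Filter.Eventually.of_forall fun x => (contF x).aestronglyMeasurable)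
    hF_int
    (contF' x₀).aestronglyMeasurable
    (Filter.Eventually.of_forall fun u => key_bound u)
    (((gauss (1 / (8 * h ^ 2)) (by positivity)).const_mul _))
    (Filter.Eventually.of_forall fun u x _ => h_diff u x)
  exact main

private lemma negder' {φ : ℝ → ℝ} {c h : ℝ} (hcont : Continuous φ)
    (hsym : ∀ x, φ (c - x) = φ (c + x)) (hdec : StrictAntiOn φ (Set.Ioi c))
    (hh : 0 < h) {x : ℝ} (hx : c < x)
    (hint : Integrable (fun u : ℝ => (h⁻¹ * ((1 / Real.sqrt (2 * Real.pi)) * φ u)) *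
        (Real.exp (-((u - x) / h) ^ 2 / 2) * ((u - x) / h ^ 2)))) :
    (∫ u : ℝ, (h⁻¹ * ((1 / Real.sqrt (2 * Real.pi)) * φ u)) *
        (Real.exp (-((u - x) / h) ^ 2 / 2) * ((u - x) / h ^ 2))) < 0 := by
  have h2 : (0:ℝ) < h ^ 2 := by positivity
  set C : ℝ := 1 / Real.sqrt (2 * Real.pi) with hCdef
  have hC : 0 < C := by
    have : 0 < Real.sqrt (2 * Real.pi) := Real.sqrt_pos.mpr (by positivity)
    positivity
  set G : ℝ → ℝ := fun t => (h⁻¹ * (C * φ (x + t))) * (Real.exp (-(t / h) ^ 2 / 2) * (t / h ^ 2))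
    with hGdef
  have htrans : (∫ u : ℝ, (h⁻¹ * (C * φ u)) *
      (Real.exp (-((u - x) / h) ^ 2 / 2) * ((u - x) / h ^ 2))) = ∫ t : ℝ, G t := by
    rw [← integral_add_left_eq_self (fun u : ℝ => (h⁻¹ * (C * φ u)) *
      (Real.exp (-((u - x) / h) ^ 2 / 2) * ((u - x) / h ^ 2))) x]
    congr 1
    funext t
    simp only [hGdef, add_sub_cancel_left]
  have hGeq : (fun t : ℝ => (fun u : ℝ => (h⁻¹ * (C * φ u)) *
      (Real.exp (-((u - x) / h) ^ 2 / 2) * ((u - x) / h ^ 2))) (x + t)) = G := by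
    funext t
    simp only [hGdef, add_sub_cancel_left]
  have intG : Integrable G := by
    rw [← hGeq]
    exact hint.comp_add_left x
  have intGneg : Integrable (fun t => G (-t)) := intG.comp_neg
  have hD : ∀ t : ℝ, G t + G (-t) =
      (h⁻¹ * C * (Real.exp (-(t / h) ^ 2 / 2) * (t / h ^ 2))) * (φ (x + t) - φ (x - t)) := by
    intro t
    simp only [hGdef]
    rw [show x + -t = x - t by ring, show -t / h = -(t / h) by ring, neg_sq,
      show -t / h ^ 2 = -(t / h ^ 2) by ring]
    ring
  have hDneg : ∀ t : ℝ, 0 < t → G t + G (-t) < 0 := by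
    intro t ht
    rw [hD]
    apply mul_neg_of_pos_of_neg
    · exact mul_pos (mul_pos (inv_pos.mpr hh) hC)
        (mul_pos (Real.exp_pos _) (div_pos ht h2))
    · have := cmp' hcont hsym hdec x hx t ht
      linarith
  have hDle : ∀ t : ℝ, G t + G (-t) ≤ 0 := by
    intro t
    rcases lt_trichotomy t 0 with h1 | rfl | h1
    · have := hDneg (-t) (by linarith)
      rw [neg_neg] at this
      linarith
    · rw [hD]
      simp
    · exact (hDneg t h1).le
  have intD : Integrable (fun t => G t + G (-t)) := intG.add intGneg
  have pos : 0 < ∫ t : ℝ, -(G t + G (-t)) := by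
    rw [integral_pos_iff_support_of_nonneg (fun t => neg_nonneg.mpr (hDle t)) intD.neg]
    have hsub : Set.Ioi (0:ℝ) ⊆ Function.support (fun t => -(G t + G (-t))) := by
      intro t ht
      exact (neg_pos.mpr (hDneg t ht)).ne'
    have := measure_mono (μ := volume) hsub
    rw [Real.volume_Ioi] at this
    exact lt_of_lt_of_le (by simp) this
  have hneg : (∫ t : ℝ, G t + G (-t)) < 0 := by
    rw [integral_neg] at pos
    linarith
  have hrefl : (∫ t : ℝ, G (-t)) = ∫ t : ℝ, G t := integral_neg_eq_self G volume
  rw [integral_add intG intGneg, hrefl] at hneg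
  rw [htrans]
  linarith

end Stmt4Aux

theorem stmt_4 (φ : ℝ → ℝ) (c : ℝ)
    (hbdd : ∃ M, ∀ x, |φ x| ≤ M) (hcont : Continuous φ)
    (hsym : ∀ x, φ (c - x) = φ (c + x))
    (hdec : StrictAntiOn φ (Set.Ioi c))
    (hnonconst : ∃ x y, φ x ≠ φ y)
    (h : ℝ) (hh : 0 < h) :
    (∀ x : ℝ, DifferentiableAt ℝ
      (fun x : ℝ => ∫ y : ℝ, (1 / Real.sqrt (2 * Real.pi)) * φ (x + h * y) *
        Real.exp (-y ^ 2 / 2)) x) ∧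
    (∀ x : ℝ, Real.sign (deriv
      (fun x : ℝ => ∫ y : ℝ, (1 / Real.sqrt (2 * Real.pi)) * φ (x + h * y) *
        Real.exp (-y ^ 2 / 2)) x) = - Real.sign (x - c)) ∧
    (∀ x : ℝ, c < x → deriv
      (fun x : ℝ => ∫ y : ℝ, (1 / Real.sqrt (2 * Real.pi)) * φ (x + h * y) *
        Real.exp (-y ^ 2 / 2)) x < 0) := by
  obtain ⟨M, hM⟩ := hbdd
  have heq : (fun x : ℝ => ∫ y : ℝ, (1 / Real.sqrt (2 * Real.pi)) * φ (x + h * y) *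
      Real.exp (-y ^ 2 / 2)) = fun x : ℝ => ∫ u : ℝ,
      (h⁻¹ * ((1 / Real.sqrt (2 * Real.pi)) * φ u)) * Real.exp (-((u - x) / h) ^ 2 / 2) :=
    funext (chg' hh)
  set D : ℝ → ℝ := fun x => ∫ u : ℝ, (h⁻¹ * ((1 / Real.sqrt (2 * Real.pi)) * φ u)) *
    (Real.exp (-((u - x) / h) ^ 2 / 2) * ((u - x) / h ^ 2)) with hDdef
  have hder : ∀ x, HasDerivAt (fun x : ℝ => ∫ y : ℝ,
      (1 / Real.sqrt (2 * Real.pi)) * φ (x + h * y) * Real.exp (-y ^ 2 / 2)) (D x) x := by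
    intro x
    rw [heq]
    exact (hasDeriv' hM hcont hh x).2
  have hint : ∀ x : ℝ, Integrable (fun u : ℝ =>
      (h⁻¹ * ((1 / Real.sqrt (2 * Real.pi)) * φ u)) *
      (Real.exp (-((u - x) / h) ^ 2 / 2) * ((u - x) / h ^ 2))) :=
    fun x => (hasDeriv' hM hcont hh x).1
  have hderiv_eq : ∀ x, deriv (fun x : ℝ => ∫ y : ℝ,
      (1 / Real.sqrt (2 * Real.pi)) * φ (x + h * y) * Real.exp (-y ^ 2 / 2)) x = D x :=
    fun x => (hder x).deriv
  have hnegd : ∀ x, c < x → D x < 0 := fun x hx => negder' hcont hsym hdec hh hx (hint x)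
  have hsym' : ∀ u, φ (2 * c - u) = φ u := by
    intro u
    have := hsym (u - c)
    rw [show c - (u - c) = 2 * c - u by ring, show c + (u - c) = u by ring] at this
    exact this
  have hΦsym : ∀ x : ℝ, (fun x : ℝ => ∫ y : ℝ,
      (1 / Real.sqrt (2 * Real.pi)) * φ (x + h * y) * Real.exp (-y ^ 2 / 2)) (2 * c - x) =
      (fun x : ℝ => ∫ y : ℝ,
      (1 / Real.sqrt (2 * Real.pi)) * φ (x + h * y) * Real.exp (-y ^ 2 / 2)) x := by
    intro x
    show (∫ y : ℝ, (1 / Real.sqrt (2 * Real.pi)) * φ (2 * c - x + h * y) *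
        Real.exp (-y ^ 2 / 2)) = _
    have step : (fun y : ℝ => (1 / Real.sqrt (2 * Real.pi)) * φ (2 * c - x + h * y) *
        Real.exp (-y ^ 2 / 2)) = fun y : ℝ => (1 / Real.sqrt (2 * Real.pi)) *
        φ (x + h * -y) * Real.exp (-(-y) ^ 2 / 2) := by
      funext y
      rw [neg_sq, show x + h * -y = x - h * y by ring, ← hsym' (x - h * y),
        show 2 * c - (x - h * y) = 2 * c - x + h * y by ring]
    rw [step]
    exact integral_neg_eq_self (fun y : ℝ => (1 / Real.sqrt (2 * Real.pi)) * φ (x + h * y) *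
      Real.exp (-y ^ 2 / 2)) volume
  have hodd : ∀ x, D x = -(D (2 * c - x)) := by
    intro x
    have d1 : HasDerivAt (fun x : ℝ => 2 * c - x) (-1 : ℝ) x := by
      simpa using (hasDerivAt_id x).const_sub (2 * c)
    have d2 := (hder (2 * c - x)).comp x d1
    have e : ((fun x : ℝ => ∫ y : ℝ, (1 / Real.sqrt (2 * Real.pi)) * φ (x + h * y) *
        Real.exp (-y ^ 2 / 2)) ∘ (fun x : ℝ => 2 * c - x)) = fun x : ℝ => ∫ y : ℝ,
        (1 / Real.sqrt (2 * Real.pi)) * φ (x + h * y) * Real.exp (-y ^ 2 / 2) :=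
      funext fun z => hΦsym z
    rw [e] at d2
    have huniq := (hder x).unique d2
    linarith [huniq]
  have hzero : D c = 0 := by
    have := hodd c
    rw [show 2 * c - c = c by ring] at this
    linarith
  have hpos : ∀ x, x < c → 0 < D x := by
    intro x hx
    rw [hodd x]
    have := hnegd (2 * c - x) (by linarith)
    linarith
  refine ⟨fun x => (hder x).differentiableAt, fun x => ?_, fun x hx => ?_⟩
  · rw [hderiv_eq x]
    rcases lt_trichotomy x c with h1 | rfl | h1
    · rw [Real.sign_of_pos (hpos x h1), Real.sign_of_neg (by linarith : x - c < 0)]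
      norm_num
    · rw [hzero, sub_self, Real.sign_zero]
      norm_num
    · rw [Real.sign_of_neg (hnegd x h1), Real.sign_of_pos (by linarith : (0:ℝ) < x - c)]
  · rw [hderiv_eq x]
    exact hnegd x hx
end

section
/- Let q_x(t,z) = (1/√(2πt)) exp(−((x−z)² + 2κt(|z|−|x|) + κ²t²)/(2t)) + κ e^{−2κ|z|} ∫_{|x|+|z|−κt}^{∞} (1/√(2πt)) e^{−u²/(2t)} du be the transition density of the one-dimensional diffusion dX_t = −κ sgn(X_t) dt + dB_t started at x. Then for t = 1, x = c = −(a+b)/2 with a < b and a + b ≥ 0, one has ∫_{(a−b)/2}^{(b−a)/2} q_c(1,z) dz = Φ_{−κ}(−a) − e^{−κ(b−a)} Φ_{−κ}(−b), where Φ_μ is the normal cdf with mean μ, variance 1. -/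
open MeasureTheory

/-- Cdf of the normal distribution with mean `μ` and unit variance. -/
noncomputable def normalCdf (μ x : ℝ) : ℝ :=
  ∫ t in Set.Iic x, (1 / Real.sqrt (2 * Real.pi)) * Real.exp (-(t - μ) ^ 2 / 2)

/-- The transition density `q_x(1, z)` of the diffusion
`dX_t = -κ sgn(X_t) dt + dB_t` at time `t = 1`, started at `x`. -/
noncomputable def transDensity (κ x z : ℝ) : ℝ :=
  (1 / Real.sqrt (2 * Real.pi)) *
    Real.exp (-(((x - z) ^ 2 + 2 * κ * (|z| - |x|) + κ ^ 2) / 2)) +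
  κ * Real.exp (-(2 * κ * |z|)) *
    ∫ u in Set.Ici (|x| + |z| - κ),
      (1 / Real.sqrt (2 * Real.pi)) * Real.exp (-u ^ 2 / 2)


noncomputable def gpdf (u : ℝ) : ℝ := (1 / Real.sqrt (2 * Real.pi)) * Real.exp (-u ^ 2 / 2)

noncomputable def Phi (x : ℝ) : ℝ := ∫ u in Set.Iic x, gpdf u

lemma gpdf_eq : gpdf = fun u => (1 / Real.sqrt (2 * Real.pi)) * Real.exp (-(1/2 : ℝ) * u ^ 2) := by
  funext u; unfold gpdf; congr 1; ring

lemma gpdf_cont : Continuous gpdf := by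
  rw [gpdf_eq]; fun_prop

lemma gpdf_integrable : Integrable gpdf := by
  rw [gpdf_eq]
  exact (integrable_exp_neg_mul_sq (by norm_num : (0:ℝ) < 1/2)).const_mul _

lemma gpdf_total : ∫ u, gpdf u = 1 := by
  rw [gpdf_eq]
  rw [MeasureTheory.integral_const_mul, integral_gaussian]
  rw [show Real.pi / (1/2) = 2 * Real.pi by ring]
  rw [one_div, inv_mul_cancel₀]
  positivity

lemma exp_gpdf (t s : ℝ) :
    Real.exp t * gpdf s = (1 / Real.sqrt (2 * Real.pi)) * Real.exp (t - s ^ 2 / 2) := by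
  unfold gpdf; rw [mul_left_comm, ← Real.exp_add]; congr 1; ring

lemma Phi_hasDeriv (x : ℝ) : HasDerivAt Phi (gpdf x) x := by
  have hfe : Phi = fun y => Phi 0 + ∫ u in (0:ℝ)..y, gpdf u := by
    funext y
    have h := intervalIntegral.integral_Iic_sub_Iic
      (gpdf_integrable.integrableOn (s := Set.Iic 0)) (gpdf_integrable.integrableOn (s := Set.Iic y))
    unfold Phi; linarith
  rw [hfe]
  exact (intervalIntegral.integral_hasDerivAt_right (gpdf_cont.intervalIntegrable _ _)
    (gpdf_cont.stronglyMeasurable.stronglyMeasurableAtFilter) gpdf_cont.continuousAt).const_add _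

lemma Phi_cont : Continuous Phi :=
  continuous_iff_continuousAt.2 fun x => (Phi_hasDeriv x).continuousAt

lemma Phi_sym (x : ℝ) : Phi x + Phi (-x) = 1 := by
  have h1 : Phi (-x) = ∫ u in Set.Ioi x, gpdf u := by
    unfold Phi
    have : ∀ u : ℝ, gpdf u = gpdf (-u) := by intro u; unfold gpdf; congr 1; ring
    calc (∫ u in Set.Iic (-x), gpdf u) = ∫ u in Set.Iic (-x), gpdf (-u) := by
            exact setIntegral_congr_fun measurableSet_Iic fun u _ => this u
      _ = ∫ u in Set.Ioi (-(-x)), gpdf u := integral_comp_neg_Iic _ _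
      _ = ∫ u in Set.Ioi x, gpdf u := by rw [neg_neg]
  rw [h1]
  unfold Phi
  rw [intervalIntegral.integral_Iic_add_Ioi gpdf_integrable.integrableOn gpdf_integrable.integrableOn,
    gpdf_total]

lemma tail_eq (x : ℝ) :
    (∫ u in Set.Ici x, (1 / Real.sqrt (2 * Real.pi)) * Real.exp (-u ^ 2 / 2)) = 1 - Phi x := by
  have : (∫ u in Set.Ici x, (1 / Real.sqrt (2 * Real.pi)) * Real.exp (-u ^ 2 / 2))
      = ∫ u in Set.Ici x, gpdf u := rfl
  rw [this, MeasureTheory.integral_Ici_eq_integral_Ioi]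
  have h := intervalIntegral.integral_Iic_add_Ioi (b := x) (μ := volume)
    gpdf_integrable.integrableOn gpdf_integrable.integrableOn
  rw [gpdf_total] at h
  unfold Phi; linarith

lemma key1 (κ m z : ℝ) :
    Real.exp (2*κ*m) * gpdf (z + m + κ) = Real.exp (-(2*κ*z)) * gpdf (z + m - κ) := by
  rw [exp_gpdf, exp_gpdf]; congr 1; ring

lemma key2 (κ m z : ℝ) :
    Real.exp (2*κ*z) * gpdf (m - z - κ) = Real.exp (2*κ*m) * gpdf (z - m - κ) := by
  rw [exp_gpdf, exp_gpdf]; congr 1; ring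

noncomputable def Faux (κ m z : ℝ) : ℝ :=
  1/2 * Real.exp (2*κ*m) * Phi (z + m + κ)
    - 1/2 * (Real.exp (-(2*κ*z)) * (1 - Phi (z + m - κ)))

noncomputable def Gaux (κ m z : ℝ) : ℝ :=
  Phi (z + m - κ) + 1/2 * (Real.exp (2*κ*z) * (1 - Phi (m - z - κ)))
    - 1/2 * Real.exp (2*κ*m) * Phi (z - m - κ)

lemma Faux_deriv (κ m z : ℝ) :
    HasDerivAt (Faux κ m)
      (Real.exp (-(2*κ*z)) * gpdf (z + m - κ)
        + κ * Real.exp (-(2*κ*z)) * (1 - Phi (z + m - κ))) z := by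
  have h1 : HasDerivAt (fun y : ℝ => y + m + κ) 1 z := by
    simpa using ((hasDerivAt_id z).add_const m).add_const κ
  have h2 : HasDerivAt (fun y : ℝ => y + m - κ) 1 z := by
    simpa using ((hasDerivAt_id z).add_const m).sub_const κ
  have hP1 : HasDerivAt (fun y : ℝ => Phi (y + m + κ)) (gpdf (z + m + κ)) z := by
    simpa [Function.comp_def] using (Phi_hasDeriv (z + m + κ)).comp z h1
  have hP2 : HasDerivAt (fun y : ℝ => Phi (y + m - κ)) (gpdf (z + m - κ)) z := by
    simpa [Function.comp_def] using (Phi_hasDeriv (z + m - κ)).comp z h2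
  have hE : HasDerivAt (fun y : ℝ => Real.exp (-(2*κ*y))) (-(2*κ) * Real.exp (-(2*κ*z))) z := by
    have hlin : HasDerivAt (fun y : ℝ => -(2*κ*y)) (-(2*κ)) z := by
      simpa using ((hasDerivAt_id z).const_mul (2*κ)).fun_neg
    simpa [mul_comm] using hlin.exp
  have hD := (hP1.const_mul (1/2 * Real.exp (2*κ*m))).fun_sub
    ((hE.fun_mul ((hasDerivAt_const z (1:ℝ)).fun_sub hP2)).const_mul (1/2))
  have hfun : (fun y => 1/2 * Real.exp (2*κ*m) * Phi (y + m + κ)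
      - 1/2 * (Real.exp (-(2*κ*y)) * (1 - Phi (y + m - κ)))) = Faux κ m := by
    funext y; rfl
  rw [hfun] at hD
  exact hD.congr_deriv (by linear_combination (1/2) * key1 κ m z)

lemma Gaux_deriv (κ m z : ℝ) :
    HasDerivAt (Gaux κ m)
      (gpdf (z + m - κ) + κ * Real.exp (2*κ*z) * (1 - Phi (m - z - κ))) z := by
  have h2 : HasDerivAt (fun y : ℝ => y + m - κ) 1 z := by
    simpa using ((hasDerivAt_id z).add_const m).sub_const κ
  have h3 : HasDerivAt (fun y : ℝ => m - y - κ) (-1) z := by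
    simpa using ((hasDerivAt_id z).const_sub m).sub_const κ
  have h4 : HasDerivAt (fun y : ℝ => y - m - κ) 1 z := by
    simpa using ((hasDerivAt_id z).sub_const m).sub_const κ
  have hP2 : HasDerivAt (fun y : ℝ => Phi (y + m - κ)) (gpdf (z + m - κ)) z := by
    simpa [Function.comp_def] using (Phi_hasDeriv (z + m - κ)).comp z h2
  have hP3 : HasDerivAt (fun y : ℝ => Phi (m - y - κ)) (gpdf (m - z - κ) * (-1)) z := by
    simpa [Function.comp_def] using (Phi_hasDeriv (m - z - κ)).comp z h3
  have hP4 : HasDerivAt (fun y : ℝ => Phi (y - m - κ)) (gpdf (z - m - κ)) z := by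
    simpa [Function.comp_def] using (Phi_hasDeriv (z - m - κ)).comp z h4
  have hE : HasDerivAt (fun y : ℝ => Real.exp (2*κ*y)) (2*κ * Real.exp (2*κ*z)) z := by
    have hlin : HasDerivAt (fun y : ℝ => 2*κ*y) (2*κ) z := by
      simpa using (hasDerivAt_id z).const_mul (2*κ)
    simpa [mul_comm] using hlin.exp
  have hD := (hP2.fun_add ((hE.fun_mul ((hasDerivAt_const z (1:ℝ)).fun_sub hP3)).const_mul (1/2))).fun_sub
    (hP4.const_mul (1/2 * Real.exp (2*κ*m)))
  have hfun : (fun y => Phi (y + m - κ) + 1/2 * (Real.exp (2*κ*y) * (1 - Phi (m - y - κ)))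
      - 1/2 * Real.exp (2*κ*m) * Phi (y - m - κ)) = Gaux κ m := by
    funext y; rfl
  rw [hfun] at hD
  exact hD.congr_deriv (by linear_combination (1/2) * key2 κ m z)

lemma normalCdf_eq (μ x : ℝ) : normalCdf μ x = Phi (x - μ) := by
  unfold normalCdf Phi gpdf
  have h : MeasurePreserving (fun t : ℝ => t + -μ) volume volume :=
    ⟨measurable_add_const _, map_add_right_eq_self volume _⟩
  have emb : MeasurableEmbedding (fun t : ℝ => t + -μ) :=
    (Homeomorph.addRight (-μ)).isClosedEmbedding.measurableEmbedding
  have key := h.setIntegral_preimage_emb emb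
    (fun t => (1 / Real.sqrt (2 * Real.pi)) * Real.exp (-t ^ 2 / 2)) (Set.Iic (x - μ))
  have hpre : (fun t : ℝ => t + -μ) ⁻¹' Set.Iic (x - μ) = Set.Iic x := by
    ext t; simp only [Set.mem_preimage, Set.mem_Iic]; constructor <;> intro <;> linarith
  rw [hpre] at key
  rw [← key]
  simp only [sub_eq_add_neg]


theorem stmt_13 (κ a b : ℝ) (hκ : 0 < κ) (hab : a < b) (hsum : 0 ≤ a + b) :
    (∫ z in Set.Icc ((a - b) / 2) ((b - a) / 2),
        transDensity κ (-(a + b) / 2) z) =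
      normalCdf (-κ) (-a) - Real.exp (-κ * (b - a)) * normalCdf (-κ) (-b) := by
  have hm0 : (0:ℝ) ≤ (a + b) / 2 := by linarith
  have hL0 : (0:ℝ) < (b - a) / 2 := by linarith
  set m : ℝ := (a + b) / 2 with hm
  set L : ℝ := (b - a) / 2 with hL
  have habs : |(-(a + b) / 2 : ℝ)| = m := by
    rw [abs_of_nonpos (by linarith)]; rw [hm]; ring
  -- the integrand, rewritten through Phi
  set Q : ℝ → ℝ := fun z =>
    (1 / Real.sqrt (2 * Real.pi)) *
      Real.exp (-(((-m - z) ^ 2 + 2 * κ * (|z| - m) + κ ^ 2) / 2))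
      + κ * Real.exp (-(2 * κ * |z|)) * (1 - Phi (m + |z| - κ)) with hQ
  have hQeq : ∀ z, transDensity κ (-(a + b) / 2) z = Q z := by
    intro z
    unfold transDensity
    rw [tail_eq, habs, hQ]
    have : (-(a + b) / 2 : ℝ) = -m := by rw [hm]; ring
    rw [this]
  have Phi_c := Phi_cont
  have hQcont : Continuous Q := by
    rw [hQ]
    apply Continuous.add
    · exact continuous_const.mul (Real.continuous_exp.comp (by fun_prop))
    · exact (continuous_const.mul (Real.continuous_exp.comp (by fun_prop))).mul
        (continuous_const.sub (Phi_c.comp (by fun_prop)))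
  -- move to an interval integral
  have hIcc : (∫ z in Set.Icc ((a - b) / 2) L, transDensity κ (-(a + b) / 2) z)
      = ∫ z in (-L)..L, Q z := by
    rw [show (a - b) / 2 = -L by rw [hL]; ring]
    rw [MeasureTheory.integral_Icc_eq_integral_Ioc,
      ← intervalIntegral.integral_of_le (by linarith : -L ≤ L)]
    exact intervalIntegral.integral_congr fun z _ => hQeq z
  rw [hIcc]
  have int1 : IntervalIntegrable Q volume (-L) 0 := hQcont.intervalIntegrable _ _
  have int2 : IntervalIntegrable Q volume 0 L := hQcont.intervalIntegrable _ _
  rw [← intervalIntegral.integral_add_adjacent_intervals int1 int2]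
  -- the two smooth versions
  set Qp : ℝ → ℝ := fun z => Real.exp (-(2*κ*z)) * gpdf (z + m - κ)
      + κ * Real.exp (-(2*κ*z)) * (1 - Phi (z + m - κ)) with hQpd
  set Qm : ℝ → ℝ := fun z => gpdf (z + m - κ)
      + κ * Real.exp (2*κ*z) * (1 - Phi (m - z - κ)) with hQmd
  have hQpcont : Continuous Qp := by
    rw [hQpd]
    exact ((Real.continuous_exp.comp (by fun_prop)).mul (gpdf_cont.comp (by fun_prop))).add
      ((continuous_const.mul (Real.continuous_exp.comp (by fun_prop))).mul
        (continuous_const.sub (Phi_c.comp (by fun_prop))))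
  have hQmcont : Continuous Qm := by
    rw [hQmd]
    exact (gpdf_cont.comp (by fun_prop)).add
      ((continuous_const.mul (Real.continuous_exp.comp (by fun_prop))).mul
        (continuous_const.sub (Phi_c.comp (by fun_prop))))
  have hpiece2 : (∫ z in (0:ℝ)..L, Q z) = Faux κ m L - Faux κ m 0 := by
    rw [intervalIntegral.integral_congr (g := Qp) ?_]
    · exact intervalIntegral.integral_eq_sub_of_hasDerivAt
        (fun z _ => Faux_deriv κ m z) (hQpcont.intervalIntegrable _ _)
    · intro z hz
      rw [Set.uIcc_of_le (le_of_lt hL0)] at hz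
      rw [hQ, hQpd]
      simp only
      rw [abs_of_nonneg hz.1, exp_gpdf]
      have e1 : (1 / Real.sqrt (2 * Real.pi)) *
          Real.exp (-(((-m - z) ^ 2 + 2 * κ * (z - m) + κ ^ 2) / 2))
          = (1 / Real.sqrt (2 * Real.pi)) * Real.exp (-(2*κ*z) - (z + m - κ)^2/2) := by
        congr 1; ring
      rw [e1]
      ring_nf
  have hpiece1 : (∫ z in (-L)..(0:ℝ), Q z) = Gaux κ m 0 - Gaux κ m (-L) := by
    rw [intervalIntegral.integral_congr (g := Qm) ?_]
    · exact intervalIntegral.integral_eq_sub_of_hasDerivAt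
        (fun z _ => Gaux_deriv κ m z) (hQmcont.intervalIntegrable _ _)
    · intro z hz
      rw [Set.uIcc_of_le (by linarith : -L ≤ (0:ℝ))] at hz
      rw [hQ, hQmd]
      simp only
      rw [abs_of_nonpos hz.2]
      have e1 : (1 / Real.sqrt (2 * Real.pi)) *
          Real.exp (-(((-m - z) ^ 2 + 2 * κ * (-z - m) + κ ^ 2) / 2))
          = gpdf (z + m - κ) := by
        unfold gpdf; congr 1; ring
      rw [e1]
      have e2 : (-(2 * κ * (-z)) : ℝ) = 2*κ*z := by ring
      have e3 : (m + -z - κ : ℝ) = m - z - κ := by ring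
      rw [e2, e3]
  rw [hpiece1, hpiece2]
  -- final algebra
  rw [normalCdf_eq, normalCdf_eq]
  unfold Faux Gaux
  have s1 := Phi_sym (m + κ)
  have s2 := Phi_sym (L + m + κ)
  have s3 := Phi_sym (m - L - κ)
  have s4 := Phi_sym (L + m - κ)
  have r1 : (-a - -κ : ℝ) = -(m - L - κ) := by rw [hm, hL]; ring
  have r2 : (-b - -κ : ℝ) = -(L + m - κ) := by rw [hm, hL]; ring
  have r3 : (-κ * (b - a) : ℝ) = -(2*κ*L) := by rw [hL]; ring
  rw [r1, r2, r3]
  have t1 : ((0:ℝ) + m + κ) = m + κ := by ring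
  have t2 : ((0:ℝ) + m - κ) = m - κ := by ring
  have t3 : (m - (0:ℝ) - κ) = m - κ := by ring
  have t4 : ((0:ℝ) - m - κ) = -(m + κ) := by ring
  have t5 : (-L + m - κ : ℝ) = m - L - κ := by ring
  have t6 : (m - -L - κ : ℝ) = L + m - κ := by ring
  have t7 : (-L - m - κ : ℝ) = -(L + m + κ) := by ring
  have t8 : (-(2*κ*(0:ℝ)) : ℝ) = 0 := by ring
  have t9 : (2*κ*(0:ℝ) : ℝ) = 0 := by ring
  have t10 : (2*κ*(-L) : ℝ) = -(2*κ*L) := by ring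
  rw [t1, t2, t3, t4, t5, t6, t7, t8, t9, t10, Real.exp_zero]
  linear_combination (1/2) * Real.exp (2*κ*m) * s2 - (1/2) * Real.exp (2*κ*m) * s1
    - s3 + Real.exp (-(2*κ*L)) * s4
end

section
/- Let ℒ be a set of mutually equivalent probability measures on a measurable space and 𝒫^{IID} the associated IID set on the infinite product. Then any two measures P, Q ∈ 𝒫^{IID} are equivalent on each finite σ-algebra 𝒢_n (generated by the first n coordinates). The proof is by induction on n: equivalence on 𝒢₁ follows from equivalence of measures in ℒ, and the inductive step uses P(A) = 0 ⟺ P({E_P[1_A|𝒢_{n−1}] > 0}) = 0 together with the fact that the sets {E_P[1_A|𝒢_{n−1}] > 0} and {E_Q[1_A|𝒢_{n−1}] > 0} coincide by equivalence of one-step conditionals. -/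
open MeasureTheory

/-- Projection of an infinite trajectory onto its first `n` coordinates. -/
def proj {Ωb : Type*} (n : ℕ) (ω : ℕ → Ωb) : Fin n → Ωb := fun i => ω i

/-- `P` belongs to the IID model `𝒫^{IID}` generated by `ℒ`: for each `n`, the
one-step-ahead conditionals of `P` form a measurable kernel with values in `ℒ`. -/
def MemIID {Ωb : Type*} [MeasurableSpace Ωb] (ℒ : Set (Measure Ωb))
    (P : Measure (ℕ → Ωb)) : Prop :=
  ∀ n : ℕ, ∃ lam : (Fin n → Ωb) → Measure Ωb,
    (∀ x, lam x ∈ ℒ) ∧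
    (∀ B : Set Ωb, MeasurableSet B → Measurable fun x => lam x B) ∧
    ∀ A : Set (Fin (n + 1) → Ωb), MeasurableSet A →
      P.map (proj (n + 1)) A =
        ∫⁻ x, lam x {y | Fin.snoc x y ∈ A} ∂(P.map (proj n))

theorem stmt_17 {Ωb : Type*} [MeasurableSpace Ωb]
    (ℒ : Set (Measure Ωb)) (hne : ℒ.Nonempty)
    (hprobL : ∀ q ∈ ℒ, IsProbabilityMeasure q)
    (hequivL : ∀ p ∈ ℒ, ∀ q ∈ ℒ, p ≪ q)
    (P Q : Measure (ℕ → Ωb)) (hP : MemIID ℒ P) (hQ : MemIID ℒ Q)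
    (hPp : IsProbabilityMeasure P) (hQp : IsProbabilityMeasure Q)
    (n : ℕ) (A : Set (Fin n → Ωb)) (hA : MeasurableSet A) :
    P.map (proj n) A = 0 ↔ Q.map (proj n) A = 0 := by
  have hproj : ∀ m : ℕ, Measurable (proj (Ωb := Ωb) m) := fun m =>
    measurable_pi_lambda _ fun i => measurable_pi_apply _
  induction n with
  | zero =>
    haveI : IsProbabilityMeasure (P.map (proj 0)) := Measure.isProbabilityMeasure_map (hproj 0).aemeasurable
    haveI : IsProbabilityMeasure (Q.map (proj 0)) := Measure.isProbabilityMeasure_map (hproj 0).aemeasurable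
    rcases Set.eq_empty_or_nonempty A with h | h
    · simp [h]
    · have hAu : A = Set.univ := by
        obtain ⟨a, ha⟩ := h
        ext x
        simpa [Subsingleton.elim x a] using ha
      simp [hAu]
  | succ n ih =>
    obtain ⟨lamP, hlamPL, hlamPm, hlamP⟩ := hP n
    obtain ⟨lamQ, hlamQL, hlamQm, hlamQ⟩ := hQ n
    -- measurability of the section evaluations
    have hsnoc : Measurable (fun p : (Fin n → Ωb) × Ωb => (Fin.snoc p.1 p.2 : Fin (n+1) → Ωb)) := by
      apply measurable_pi_lambda
      intro i
      refine Fin.lastCases ?_ (fun j => ?_) i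
      · simpa using measurable_snd
      · simpa [Function.comp_def] using (measurable_pi_apply j).comp measurable_fst
    have hkey : ∀ lam : (Fin n → Ωb) → Measure Ωb, (∀ x, lam x ∈ ℒ) →
        (∀ B : Set Ωb, MeasurableSet B → Measurable fun x => lam x B) →
        Measurable (fun x => lam x {y | Fin.snoc x y ∈ A}) := by
      intro lam hL hm
      letI κ : ProbabilityTheory.Kernel (Fin n → Ωb) Ωb :=
        ⟨lam, Measure.measurable_of_measurable_coe _ (fun s hs => hm s hs)⟩
      haveI : ProbabilityTheory.IsMarkovKernel κ := ⟨fun x => hprobL _ (hL x)⟩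
      have ht : MeasurableSet ((fun p : (Fin n → Ωb) × Ωb => (Fin.snoc p.1 p.2 : Fin (n+1) → Ωb)) ⁻¹' A) :=
        hsnoc hA
      have := ProbabilityTheory.Kernel.measurable_kernel_prodMk_left (κ := κ) ht
      convert this using 2 with x
      rfl
    have hfP := hkey lamP hlamPL hlamPm
    have hfQ := hkey lamQ hlamQL hlamQm
    -- the two "positive conditional probability" sets coincide
    have hsets : {x | lamP x {y | Fin.snoc x y ∈ A} ≠ 0} =
        {x | lamQ x {y | Fin.snoc x y ∈ A} ≠ 0} := by
      ext x
      simp only [Set.mem_setOf_eq, not_iff_not]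
      exact ⟨fun h => (hequivL _ (hlamQL x) _ (hlamPL x)) h,
             fun h => (hequivL _ (hlamPL x) _ (hlamQL x)) h⟩
    have hzero : ∀ (R : Measure (ℕ → Ωb)) (lam : (Fin n → Ωb) → Measure Ωb),
        Measurable (fun x => lam x {y | Fin.snoc x y ∈ A}) →
        (R.map (proj (n + 1)) A = ∫⁻ x, lam x {y | Fin.snoc x y ∈ A} ∂(R.map (proj n))) →
        (R.map (proj (n + 1)) A = 0 ↔
          R.map (proj n) {x | lam x {y | Fin.snoc x y ∈ A} ≠ 0} = 0) := by
      intro R lam hm heq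
      rw [heq, lintegral_eq_zero_iff hm]
      rw [Filter.EventuallyEq, ae_iff]
      simp only [Pi.zero_apply]
    have hsP : MeasurableSet {x | lamP x {y | Fin.snoc x y ∈ A} ≠ 0} :=
      (hfP (measurableSet_singleton 0)).compl
    rw [hzero P lamP hfP (hlamP A hA), hzero Q lamQ hfQ (hlamQ A hA), ← hsets]
    exact ih _ hsP
end
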